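/- arXiv:0808.3651 — 4 statements merged into one kernel-verified Lean document; each statement's English description precedes it below -/
import Mathlib

section
/- Let M be a probabilistic automaton, R ⊆ S × S, and (s1,s2) ∈ R with L(s1)=L(s2) and Act(s1) ⊆ Act(s2). Fix α ∈ Act(s1) with Steps_α(s2) = {μ1,…,μk}, k > 0, and a transition s1 →α μ. Then there exists a combined transition s2 ⇒α μc (i.e., μc = Σᵢ cᵢ μᵢ for some c₁,…,c_k ∈ [0,1] with Σᵢcᵢ=1) with μ ⊑_R μc if and only if the following system of linear constraints is feasible: Σᵢ cᵢ = 1; 0 ≤ cᵢ ≤ 1 for all i; 0 ≤ f_{(s,t)} ≤ 1 for all (s,t) ∈ R⊥; μ(s) = Σ_{t : (s,t)∈R⊥} f_{(s,t)} for all s ∈ S⊥; and Σ_{s : (s,t)∈R⊥} f_{(s,t)} = Σᵢ cᵢ μᵢ(t) for all t ∈ S⊥. -/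
open Finset

variable {S : Type*} [Fintype S]

/-- Extension of a sub-distribution on `S` to `S⊥ = Option S`
(`none` plays the role of `⊥`, carrying the deficit mass). -/
def ext (μ : S → ℝ) : Option S → ℝ
  | some s => μ s
  | none => 1 - ∑ s, μ s

/-- `R⊥ = R ∪ {(⊥, s) | s ∈ S⊥}`. -/
def Rbot (R : Set (S × S)) (a b : Option S) : Prop :=
  (∃ s t, a = some s ∧ b = some t ∧ (s, t) ∈ R) ∨ a = none

/-- `Δ` is a weight function for `(μ, μ')` with respect to `R`:
`Δ : S⊥ × S⊥ → [0,1]`, positivity of `Δ(s,s')` implies `(s,s') ∈ R⊥`,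
rows sum to `μ`, columns sum to `μ'`. -/
def IsWeight (R : Set (S × S)) (μ μ' : S → ℝ) (Δ : Option S → Option S → ℝ) : Prop :=
  (∀ a b, 0 ≤ Δ a b ∧ Δ a b ≤ 1) ∧
  (∀ a b, 0 < Δ a b → Rbot R a b) ∧
  (∀ a, ext μ a = ∑ b, Δ a b) ∧
  (∀ b, ext μ' b = ∑ a, Δ a b)

/-- `μ ⊑_R μ'`: there exists a weight function for `(μ, μ')` w.r.t. `R`. -/
def Lift (R : Set (S × S)) (μ μ' : S → ℝ) : Prop :=
  ∃ Δ, IsWeight R μ μ' Δ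

variable {Act AP : Type*}

/-- `s ⇒α μ` is a combined transition: `μ` is a convex combination of
`α`-successor distributions of `s`. -/
def Combined (trans : S → Act → Set (S → ℝ)) (s : S) (α : Act) (μ : S → ℝ) : Prop :=
  ∃ (k : ℕ) (c : Fin k → ℝ) (ν : Fin k → S → ℝ),
    0 < k ∧ (∀ i, ν i ∈ trans s α) ∧ (∀ i, 0 ≤ c i ∧ c i ≤ 1) ∧
    (∑ i, c i) = 1 ∧ ∀ t, μ t = ∑ i, c i * ν i t

/-- `R` is a strong simulation on the probabilistic automaton. -/
def IsStrongSimPA (trans : S → Act → Set (S → ℝ)) (L : S → Set AP)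
    (R : Set (S × S)) : Prop :=
  ∀ p ∈ R, L p.1 = L p.2 ∧
    ∀ α μ₁, μ₁ ∈ trans p.1 α → ∃ μ₂ ∈ trans p.2 α, Lift R μ₁ μ₂

/-- `R` is a strong probabilistic simulation on the probabilistic automaton. -/
def IsStrongProbSimPA (trans : S → Act → Set (S → ℝ)) (L : S → Set AP)
    (R : Set (S × S)) : Prop :=
  ∀ p ∈ R, L p.1 = L p.2 ∧
    ∀ α μ₁, μ₁ ∈ trans p.1 α → ∃ μ₂, Combined trans p.2 α μ₂ ∧ Lift R μ₁ μ₂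

open scoped Classical


lemma ext_comb {S : Type*} [Fintype S] {k : ℕ} (c : Fin k → ℝ) (ν : Fin k → S → ℝ) (μc : S → ℝ)
    (hc : (∑ i, c i) = 1) (h : ∀ t, μc t = ∑ i, c i * ν i t) :
    ∀ b, ext μc b = ∑ i, c i * ext (ν i) b := by
  intro b
  cases b with
  | some t => exact h t
  | none =>
    show 1 - ∑ s, μc s = ∑ i, c i * (1 - ∑ s, ν i s)
    simp only [h, mul_sub, mul_one, Finset.sum_sub_distrib, hc, Finset.mul_sum]
    rw [Finset.sum_comm]

/-- existence of a combined transition `s₂ ⇒α μc` with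
`μ ⊑_R μc` is equivalent to feasibility of the LP of Lemma 4.10. -/
theorem combined_weight_iff_LP (trans : S → Act → Set (S → ℝ)) (L : S → Set AP)
    (R : Set (S × S)) (s₁ s₂ : S) (hR : (s₁, s₂) ∈ R) (hL : L s₁ = L s₂)
    (hAct : ∀ a : Act, (trans s₁ a).Nonempty → (trans s₂ a).Nonempty)
    (α : Act) (k : ℕ) (hk : 0 < k) (μs : Fin k → S → ℝ)
    (henum : trans s₂ α = Set.range μs)
    (μ : S → ℝ) (hμ : μ ∈ trans s₁ α)
    (hμ0 : ∀ t, 0 ≤ μ t) (hμ1 : ∑ t, μ t ≤ 1)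
    (hμs0 : ∀ i t, 0 ≤ μs i t) (hμs1 : ∀ i, ∑ t, μs i t ≤ 1) :
    (∃ μc : S → ℝ, Combined trans s₂ α μc ∧ Lift R μ μc) ↔
    (∃ (c : Fin k → ℝ) (f : Option S → Option S → ℝ),
      (∑ i, c i) = 1 ∧
      (∀ i, 0 ≤ c i ∧ c i ≤ 1) ∧
      (∀ a b, Rbot R a b → 0 ≤ f a b ∧ f a b ≤ 1) ∧
      (∀ a : Option S, ext μ a = ∑ b ∈ Finset.univ.filter (fun b => Rbot R a b), f a b) ∧
      (∀ b : Option S, (∑ a ∈ Finset.univ.filter (fun a => Rbot R a b), f a b) =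
        ∑ i, c i * ext (μs i) b)) := by
  constructor
  · rintro ⟨μc, ⟨k', c', ν, hk', hmem, hc01, hc1, hconv⟩, Δ, hΔ01, hΔpos, hrow, hcol⟩
    -- reindex: each ν i is some μs (j i)
    have hj : ∀ i, ∃ m : Fin k, μs m = ν i := by
      intro i
      have := hmem i
      rw [henum] at this
      exact this
    choose j hjν using hj
    refine ⟨fun m => ∑ i ∈ Finset.univ.filter (fun i => j i = m), c' i, Δ, ?_, ?_, ?_, ?_, ?_⟩
    · rw [← hc1, ← Finset.sum_fiberwise (g := j) (f := c')]
    · intro m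
      constructor
      · exact Finset.sum_nonneg fun i _ => (hc01 i).1
      · calc (∑ i ∈ Finset.univ.filter (fun i => j i = m), c' i)
            ≤ ∑ i, c' i := Finset.sum_le_sum_of_subset_of_nonneg
              (Finset.filter_subset _ _) (fun i _ _ => (hc01 i).1)
          _ = 1 := hc1
    · intro a b _; exact hΔ01 a b
    · intro a
      rw [hrow a]
      symm
      apply Finset.sum_filter_of_ne
      intro b _ hne
      exact hΔpos a b (lt_of_le_of_ne (hΔ01 a b).1 (Ne.symm hne))
    · intro b
      have hsum : (∑ a ∈ Finset.univ.filter (fun a => Rbot R a b), Δ a b) = ∑ a, Δ a b := by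
        apply Finset.sum_filter_of_ne
        intro a _ hne
        exact hΔpos a b (lt_of_le_of_ne (hΔ01 a b).1 (Ne.symm hne))
      rw [hsum, ← hcol b]
      have hconv' : ∀ t, μc t = ∑ m, (∑ i ∈ Finset.univ.filter (fun i => j i = m), c' i) * μs m t := by
        intro t
        rw [hconv t]
        rw [← Finset.sum_fiberwise (g := j) (f := fun i => c' i * ν i t)]
        refine Finset.sum_congr rfl fun m _ => ?_
        rw [Finset.sum_mul]
        refine Finset.sum_congr rfl fun i hi => ?_
        rw [Finset.mem_filter] at hi
        rw [← hi.2, hjν i]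
      exact ext_comb _ _ _ (by rw [← hc1, ← Finset.sum_fiberwise (g := j) (f := c')]) hconv' b
  · rintro ⟨c, f, hc1, hc01, hf01, hrow, hcol⟩
    set μc : S → ℝ := fun t => ∑ i, c i * μs i t with hμc
    refine ⟨μc, ⟨k, c, μs, hk, ?_, hc01, hc1, fun t => rfl⟩, ?_⟩
    · intro i; rw [henum]; exact ⟨i, rfl⟩
    · refine ⟨fun a b => if Rbot R a b then f a b else 0, ?_, ?_, ?_, ?_⟩
      · intro a b
        by_cases h : Rbot R a b
        · simpa [h] using hf01 a b h
        · simp [h]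
      · intro a b hpos
        by_cases h : Rbot R a b
        · exact h
        · simp [h] at hpos
      · intro a
        rw [hrow a, Finset.sum_filter]
      · intro b
        rw [← Finset.sum_filter, hcol b]
        exact ext_comb c μs μc hc1 (fun t => rfl) b
end

section
/- In a network N = (V,E,c) with designated subsets MU1 of source-adjacent vertices and MU2 of sink-adjacent vertices, if there exists a flow f saturating all edges 𝓈→u1 (u1 ∈ MU1) and all edges ū2→𝓉 (u2 ∈ MU2), then there exists a maximum flow with the same saturation property. (Augmenting the valid flow to a maximum flow preserves saturation of these edges.) -/
open Finset

variable {V : Type*} [Fintype V]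

/-- `f` is a flow on the finite network `(V, c)` with source `s` and sink `t`:
capacity constraints, antisymmetry, and conservation at internal vertices. -/
def IsFlow (c : V → V → ℝ) (s t : V) (f : V → V → ℝ) : Prop :=
  (∀ v w, f v w ≤ c v w) ∧
  (∀ v w, f v w = - f w v) ∧
  (∀ v, v ≠ s → v ≠ t → (∑ u, f u v) = 0)

/-- The value of a flow: the net outflow of the source. -/
def flowValue (s : V) (f : V → V → ℝ) : ℝ := ∑ w, f s w

/-- `f` saturates all source edges into `MU1` and all sink edges from `MU2`. -/
def Valid (c : V → V → ℝ) (s t : V) (MU1 MU2 : Set V) (f : V → V → ℝ) : Prop :=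
  (∀ u ∈ MU1, f s u = c s u) ∧ (∀ u ∈ MU2, f u t = c u t)

open List

section lists
variable {α : Type*} {r : α → α → Prop}

lemma mem_zipTail_fst {x y : α} :
    ∀ {L : List α}, (x, y) ∈ L.zip L.tail → x ∈ L.dropLast := by
  intro L
  induction L with
  | nil => simp
  | cons a l ih =>
    cases l with
    | nil => simp
    | cons b l' =>
      intro hm
      have : (x, y) = (a, b) ∨ (x, y) ∈ (b :: l').zip l' := by
        simpa using hm
      rcases this with h | h
      · simp [Prod.ext_iff] at h
        simp [h.1]
      · have := ih h
        simp [List.dropLast] at this ⊢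
        tauto

lemma rel_of_mem_zipTail {x y : α} :
    ∀ {L : List α}, L.Chain' r → (x, y) ∈ L.zip L.tail → r x y := by
  intro L
  induction L with
  | nil => simp
  | cons a l ih =>
    cases l with
    | nil => simp
    | cons b l' =>
      intro hc hm
      change List.IsChain r (a :: b :: l') at hc
      rw [List.isChain_cons_cons] at hc
      have : (x, y) = (a, b) ∨ (x, y) ∈ (b :: l').zip l' := by simpa using hm
      rcases this with h | h
      · obtain ⟨h1, h2⟩ := Prod.mk.injEq .. ▸ h
        simp at h
        rw [h.1, h.2]; exact hc.1
      · exact ih hc.2 h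

lemma not_rev_mem_zipTail {x y : α} :
    ∀ {L : List α}, L.Nodup → (x, y) ∈ L.zip L.tail → (y, x) ∉ L.zip L.tail := by
  intro L
  induction L with
  | nil => simp
  | cons a l ih =>
    cases l with
    | nil => simp
    | cons b l' =>
      intro hnd hm hm'
      have hm2 : (x, y) = (a, b) ∨ (x, y) ∈ (b :: l').zip l' := by simpa using hm
      have hm2' : (y, x) = (a, b) ∨ (y, x) ∈ (b :: l').zip l' := by simpa using hm'
      have hanb : a ∉ (b :: l') := (List.nodup_cons.mp hnd).1
      have hndt : (b :: l').Nodup := (List.nodup_cons.mp hnd).2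
      rcases hm2 with h | h <;> rcases hm2' with h' | h' <;> simp -failIfUnchanged only [Prod.mk.injEq] at h h'
      · exact hanb (by simp [h'.2, ← h.1, h.2, ← h'.1])
      · have hx : x ∈ l' := (List.of_mem_zip h').2
        rw [h.1] at hx
        exact hanb (List.mem_cons_of_mem _ hx)
      · have hy : y ∈ l' := (List.of_mem_zip h).2
        rw [h'.1] at hy
        exact hanb (List.mem_cons_of_mem _ hy)
      · exact ih hndt h h'

lemma sum_ite_mem_zipTail_snd {V : Type*} [Fintype V] [DecidableEq V] (e : ℝ) (x : V) :
    ∀ {L : List V}, L.Nodup →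
      (∑ u, if (u, x) ∈ L.zip L.tail then e else 0) = if x ∈ L.tail then e else 0 := by
  intro L
  induction L with
  | nil => simp
  | cons a l ih =>
    cases l with
    | nil => simp
    | cons b l' =>
      intro hnd
      have hanb : a ∉ (b :: l') := (List.nodup_cons.mp hnd).1
      have hndt : (b :: l').Nodup := (List.nodup_cons.mp hnd).2
      have hbl' : b ∉ l' := (List.nodup_cons.mp hndt).1
      have hzip : (a :: b :: l').zip (a :: b :: l').tail
          = (a, b) :: ((b :: l').zip ((b :: l').tail)) := rfl
      have hsplit : ∀ u : V,
          (if (u, x) ∈ (a :: b :: l').zip (a :: b :: l').tail then e else 0)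
          = (if u = a ∧ x = b then e else 0)
            + (if (u, x) ∈ (b :: l').zip ((b :: l').tail) then e else 0) := by
        intro u
        rw [hzip]
        by_cases h1 : (u, x) = (a, b)
        · simp only [Prod.ext_iff] at h1
          have hnm : (u, x) ∉ (b :: l').zip ((b :: l').tail) := by
            intro hmem
            have := (List.of_mem_zip hmem).2
            rw [h1.2] at this
            exact hbl' this
          have hab : (a, b) ∉ (b :: l').zip l' := by
            intro hm; exact hanb (List.of_mem_zip hm).1
          simp [h1.1, h1.2, hab]
        · have : ¬ (u = a ∧ x = b) := by
            intro hh; exact h1 (by simp [hh.1, hh.2])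
          simp [List.mem_cons, h1, this]
          exact if_congr Iff.rfl rfl rfl
      rw [Finset.sum_congr rfl (fun u _ => hsplit u), Finset.sum_add_distrib]
      rw [ih hndt]
      have h1 : (∑ u : V, if u = a ∧ x = b then e else 0)
          = if x = b then e else 0 := by
        by_cases hx : x = b
        · simp [hx]
        · simp [hx]
      rw [h1]
      by_cases hx : x = b
      · simp [hx, hbl']
      · by_cases hx2 : x ∈ (b :: l').tail <;>
          simp [hx, hx2, List.mem_cons] at hx2 ⊢ <;> tauto

lemma sum_ite_mem_zipTail_fst {V : Type*} [Fintype V] [DecidableEq V] (e : ℝ) (x : V) :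
    ∀ {L : List V}, L.Nodup →
      (∑ u, if (x, u) ∈ L.zip L.tail then e else 0) = if x ∈ L.dropLast then e else 0 := by
  intro L
  induction L with
  | nil => simp
  | cons a l ih =>
    cases l with
    | nil => simp
    | cons b l' =>
      intro hnd
      have hanb : a ∉ (b :: l') := (List.nodup_cons.mp hnd).1
      have hndt : (b :: l').Nodup := (List.nodup_cons.mp hnd).2
      have hzip : (a :: b :: l').zip (a :: b :: l').tail
          = (a, b) :: ((b :: l').zip ((b :: l').tail)) := rfl
      have hsplit : ∀ u : V,
          (if (x, u) ∈ (a :: b :: l').zip (a :: b :: l').tail then e else 0)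
          = (if x = a ∧ u = b then e else 0)
            + (if (x, u) ∈ (b :: l').zip ((b :: l').tail) then e else 0) := by
        intro u
        rw [hzip]
        by_cases h1 : (x, u) = (a, b)
        · simp only [Prod.ext_iff] at h1
          have hnm : (x, u) ∉ (b :: l').zip ((b :: l').tail) := by
            intro hmem
            have := (List.of_mem_zip hmem).1
            rw [h1.1] at this
            exact hanb this
          have hab : (a, b) ∉ (b :: l').zip l' := by
            intro hm; exact hanb (List.of_mem_zip hm).1
          simp [h1.1, h1.2, hab]
        · have : ¬ (x = a ∧ u = b) := by
            intro hh; exact h1 (by simp [hh.1, hh.2])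
          simp [List.mem_cons, h1, this]
          exact if_congr Iff.rfl rfl rfl
      rw [Finset.sum_congr rfl (fun u _ => hsplit u), Finset.sum_add_distrib]
      rw [ih hndt]
      have h1 : (∑ u : V, if x = a ∧ u = b then e else 0)
          = if x = a then e else 0 := by
        by_cases hx : x = a
        · simp [hx]
        · simp [hx]
      rw [h1]
      have hdl : (a :: b :: l').dropLast = a :: (b :: l').dropLast := rfl
      rw [hdl]
      by_cases hx : x = a
      · have hnm : x ∉ (b :: l').dropLast := by
          intro hmem
          have := List.dropLast_subset _ hmem
          rw [hx] at this
          exact hanb this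
        simp [hx, hnm] at hnm ⊢
        intro hmem; exact absurd hmem hnm
      · by_cases hx2 : x ∈ (b :: l').dropLast <;> simp [hx, hx2]

lemma getLast_not_mem_dropLast {L : List α} (hnd : L.Nodup) (h : L ≠ []) :
    L.getLast h ∉ L.dropLast := by
  intro hmem
  have heq : L.dropLast ++ [L.getLast h] = L := List.dropLast_append_getLast h
  rw [← heq] at hnd
  rw [List.nodup_append] at hnd
  exact hnd.2.2 _ hmem _ (by simp) rfl

lemma mem_dropLast_iff {L : List α} (hnd : L.Nodup) (h : L ≠ []) {x : α} :
    x ∈ L.dropLast ↔ x ∈ L ∧ x ≠ L.getLast h := by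
  constructor
  · intro hx
    refine ⟨List.dropLast_subset _ hx, ?_⟩
    intro hxe
    exact getLast_not_mem_dropLast hnd h (hxe ▸ hx)
  · intro ⟨hx, hne⟩
    have := List.dropLast_append_getLast h
    rw [← this, List.mem_append] at hx
    rcases hx with hx | hx
    · exact hx
    · simp at hx; exact absurd hx hne

lemma exists_nodup_chain_aux {r : α → α → Prop} {b : α} :
    ∀ (n : ℕ) (a : α) (l : List α), l.length ≤ n → List.Chain r a l →
      List.getLast (a :: l) (List.cons_ne_nil _ _) = b →
      ∃ m, List.Chain r a m ∧ List.getLast (a :: m) (List.cons_ne_nil _ _) = b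
        ∧ (a :: m).Nodup := by
  intro n
  induction n with
  | zero =>
    intro a l hlen hch hlast
    have : l = [] := List.length_eq_zero_iff.mp (Nat.le_zero.mp hlen)
    subst this
    exact ⟨[], List.Chain.nil, hlast, List.nodup_singleton a⟩
  | succ n ih =>
    intro a l hlen hch hlast
    by_cases ha : a ∈ l
    · obtain ⟨l₁, l₂, rfl⟩ := List.append_of_mem ha
      have hch' : List.Chain' r ((a :: l₁) ++ (a :: l₂)) := hch
      have hch2 : List.Chain r a l₂ := (List.isChain_append.mp hch').2.1
      have hlast2 : List.getLast (a :: l₂) (List.cons_ne_nil _ _) = b := by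
        rw [← hlast]
        exact (List.getLast_append_of_ne_nil (l := a :: l₁) _ (List.cons_ne_nil _ _)).symm
      have hlen2 : l₂.length ≤ n := by
        have : (l₁ ++ a :: l₂).length = l₁.length + 1 + l₂.length := by
          simp [List.length_append]; ring
        omega
      exact ih a l₂ hlen2 hch2 hlast2
    · cases l with
      | nil => exact ⟨[], List.Chain.nil, hlast, List.nodup_singleton a⟩
      | cons c l' =>
        change List.IsChain r (a :: c :: l') at hch
        rw [List.isChain_cons_cons] at hch
        have hlast' : List.getLast (c :: l') (List.cons_ne_nil _ _) = b := by
          rw [← hlast]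
          exact (List.getLast_cons_cons (a := a) (b := c) (l := l')).symm
        have hlen' : l'.length ≤ n := by simp at hlen; omega
        obtain ⟨m, hmch, hmlast, hmnd⟩ := ih c l' hlen' hch.2 hlast'
        by_cases ham : a ∈ c :: m
        · obtain ⟨p, q, hpq⟩ := List.append_of_mem ham
          have hchm : List.Chain' r (p ++ (a :: q)) := by rw [← hpq]; exact hmch
          have hq : List.Chain r a q := (List.isChain_append.mp hchm).2.1
          have hlq : List.getLast (a :: q) (List.cons_ne_nil _ _) = b := by
            have h1 : (c :: m).getLast? = some b := by
              rw [List.getLast?_eq_getLast_of_ne_nil (List.cons_ne_nil _ _), hmlast]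
            rw [hpq, List.getLast?_append_of_ne_nil p (List.cons_ne_nil _ _),
              List.getLast?_eq_getLast_of_ne_nil (List.cons_ne_nil _ _)] at h1
            exact Option.some_injective _ h1
          have hnq : (a :: q).Nodup := by
            have : (a :: q) <+ (c :: m) := hpq ▸ (List.sublist_append_right p (a :: q))
            exact List.Nodup.sublist this hmnd
          exact ⟨q, hq, hlq, hnq⟩
        · exact ⟨c :: m, List.Chain.cons hch.1 hmch,
            by rw [← hmlast]; exact List.getLast_cons_cons (a := a) (b := c) (l := m),
            List.nodup_cons.mpr ⟨ham, hmnd⟩⟩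

lemma exists_nodup_chain {r : α → α → Prop} {a b : α}
    (h : Relation.ReflTransGen r a b) :
    ∃ m, List.Chain r a m ∧ List.getLast (a :: m) (List.cons_ne_nil _ _) = b
      ∧ (a :: m).Nodup := by
  obtain ⟨l, hch, hlast⟩ := List.exists_isChain_cons_of_relationReflTransGen h
  exact exists_nodup_chain_aux l.length a l le_rfl hch hlast

end lists


lemma augment_lemma {c f : V → V → ℝ} {s t : V}
    (hf : IsFlow c s t f) {MU1 MU2 : Set V} (hv : Valid c s t MU1 MU2 f) (hst : s ≠ t)
    (hreach : Relation.ReflTransGen (fun v w => f v w < c v w) s t) :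
    ∃ g, IsFlow c s t g ∧ Valid c s t MU1 MU2 g ∧ flowValue s f < flowValue s g := by
  classical
  obtain ⟨l, hch, hlast, hnd⟩ := exists_nodup_chain hreach
  set L := s :: l with hL
  have hLne : L ≠ [] := List.cons_ne_nil _ _
  have hlne : l ≠ [] := by
    intro h
    subst h
    simp [List.getLast] at hlast
    exact hst hlast
  have hgetlast : L.getLast hLne = t := hlast
  set P := L.zip L.tail with hP
  have hch' : L.Chain' (fun v w => f v w < c v w) := hch
  have hres : ∀ p ∈ P, f p.1 p.2 < c p.1 p.2 := by
    rintro ⟨x, y⟩ hp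
    exact rel_of_mem_zipTail (r := fun v w => f v w < c v w) hch' hp
  have hPne : P ≠ [] := by
    rw [hP]
    cases' l with b l'
    · exact absurd rfl hlne
    · simp [hL]
  set Q : Finset ℝ := P.toFinset.image (fun p => c p.1 p.2 - f p.1 p.2) with hQ
  have hQne : Q.Nonempty := by
    rw [hQ]
    apply Finset.image_nonempty.mpr
    rw [← List.toFinset_nonempty_iff] at hPne
    exact hPne
  set ε : ℝ := Q.min' hQne with hε
  have hεpos : 0 < ε := by
    rw [hε, Finset.lt_min'_iff]
    intro y hy
    rw [hQ, Finset.mem_image] at hy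
    obtain ⟨p, hp, rfl⟩ := hy
    have := hres p (List.mem_toFinset.mp hp)
    linarith
  have hεle : ∀ x y, (x, y) ∈ P → ε ≤ c x y - f x y := by
    intro x y hxy
    exact Finset.min'_le _ _ (Finset.mem_image_of_mem _ (List.mem_toFinset.mpr hxy))
  obtain ⟨hcap, hskew, hcons⟩ := hf
  set g : V → V → ℝ := fun x y =>
    f x y + (if (x, y) ∈ P then ε else 0) - (if (y, x) ∈ P then ε else 0) with hg
  have hsumg : ∀ v, (∑ u, g u v)
      = (∑ u, f u v) + (if v ∈ L.tail then ε else 0) - (if v ∈ L.dropLast then ε else 0) := by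
    intro v
    have : (∑ u, g u v) = (∑ u, f u v) + (∑ u, if (u, v) ∈ P then ε else 0)
        - (∑ u, if (v, u) ∈ P then ε else 0) := by
      rw [hg]
      simp only []
      rw [Finset.sum_sub_distrib, Finset.sum_add_distrib]
    rw [this, sum_ite_mem_zipTail_snd ε v hnd, sum_ite_mem_zipTail_fst ε v hnd]
  have hgflow : IsFlow c s t g := by
    refine ⟨?_, ?_, ?_⟩
    · intro x y
      by_cases hxy : (x, y) ∈ P
      · have hyx : (y, x) ∉ P := not_rev_mem_zipTail hnd hxy
        have := hεle x y hxy
        simp only [hg, hxy, hyx, if_true, if_false]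
        linarith
      · by_cases hyx : (y, x) ∈ P <;> simp only [hg, hxy, hyx, if_true, if_false] <;>
          [linarith [hcap x y]; linarith [hcap x y]]
    · intro x y
      simp only [hg]
      rw [hskew x y]
      ring
    · intro v hvs hvt
      rw [hsumg v, hcons v hvs hvt]
      have hiff : v ∈ L.tail ↔ v ∈ L.dropLast := by
        rw [mem_dropLast_iff hnd hLne, hgetlast]
        constructor
        · intro hvl
          exact ⟨List.mem_cons_of_mem _ hvl, hvt⟩
        · rintro ⟨hvL, -⟩
          rcases List.mem_cons.mp hvL with h | h
          · exact absurd h hvs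
          · exact h
      by_cases hvL : v ∈ L.tail
      · simp [hvL, hiff.mp hvL]
      · have hndl : v ∉ L.dropLast := fun h => hvL (hiff.mpr h)
        simp [hvL, hndl]
  have hsnl : s ∉ l := (List.nodup_cons.mp hnd).1
  have hvalg : flowValue s g = flowValue s f + ε := by
    have h1 : (∑ u, g u s) = (∑ u, f u s) - ε := by
      rw [hsumg s]
      have h2 : s ∉ L.tail := hsnl
      have h3 : s ∈ L.dropLast := by
        rw [mem_dropLast_iff hnd hLne, hgetlast]
        exact ⟨List.mem_cons_self, hst⟩
      simp [h2, h3]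
    have hskewg := hgflow.2.1
    have e1 : flowValue s g = - (∑ u, g u s) := by
      rw [show flowValue s g = ∑ w, -(g w s) from
        Finset.sum_congr rfl fun w _ => hskewg s w]
      simp
    have e2 : flowValue s f = - (∑ u, f u s) := by
      rw [show flowValue s f = ∑ w, -(f w s) from
        Finset.sum_congr rfl fun w _ => hskew s w]
      simp
    rw [e1, e2, h1]
    ring
  refine ⟨g, hgflow, ⟨?_, ?_⟩, by rw [hvalg]; linarith⟩
  · intro u hu
    have hsu : (s, u) ∉ P := by
      intro hm
      have := hres (s, u) hm
      rw [hv.1 u hu] at this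
      exact lt_irrefl _ this
    have hus : (u, s) ∉ P := by
      intro hm
      exact hsnl (List.of_mem_zip hm).2
    simp only [hg, hsu, hus, if_false]
    rw [hv.1 u hu]
    ring
  · intro u hu
    have hut : (u, t) ∉ P := by
      intro hm
      have := hres (u, t) hm
      rw [hv.2 u hu] at this
      exact lt_irrefl _ this
    have htu : (t, u) ∉ P := by
      intro hm
      have := mem_zipTail_fst hm
      exact getLast_not_mem_dropLast hnd hLne (hgetlast ▸ this)
    simp only [hg, hut, htu, if_false]
    rw [hv.2 u hu]
    ring

lemma no_reach_max {c f : V → V → ℝ} {s t : V} (hf : IsFlow c s t f)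
    (hnr : ¬ Relation.ReflTransGen (fun v w => f v w < c v w) s t) :
    ∀ g, IsFlow c s t g → flowValue s g ≤ flowValue s f := by
  classical
  intro g hg
  set r : V → V → Prop := fun v w => f v w < c v w with hr
  set S : Finset V := Finset.univ.filter (fun v => Relation.ReflTransGen r s v) with hS
  have hsS : s ∈ S := by
    simp only [hS, Finset.mem_filter, Finset.mem_univ, true_and]
    exact Relation.ReflTransGen.refl
  have htS : t ∉ S := by simp [hS]; exact hnr
  have key : ∀ h : V → V → ℝ, IsFlow c s t h →
      flowValue s h = ∑ v ∈ S, ∑ w ∈ Sᶜ, h v w := by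
    intro h hh
    obtain ⟨hcap, hskew, hcons⟩ := hh
    have hout : ∀ v, v ≠ s → v ≠ t → (∑ w, h v w) = 0 := by
      intro v hvs hvt
      have e : (∑ w, h v w) = - ∑ w, h w v := by
        rw [show (∑ w, h v w) = ∑ w, -(h w v) from
          Finset.sum_congr rfl fun w _ => hskew v w]
        simp
      rw [e, hcons v hvs hvt, neg_zero]
    have h2 : (∑ v ∈ S, ∑ w, h v w) = flowValue s h := by
      apply Finset.sum_eq_single_of_mem s hsS
      intro v hvS hvne
      exact hout v hvne (fun hvt => htS (hvt ▸ hvS))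
    have h3 : (∑ v ∈ S, ∑ w ∈ S, h v w) = 0 := by
      have e : (∑ v ∈ S, ∑ w ∈ S, h v w) = - ∑ v ∈ S, ∑ w ∈ S, h v w := by
        calc (∑ v ∈ S, ∑ w ∈ S, h v w) = ∑ v ∈ S, ∑ w ∈ S, -(h w v) := by
              exact Finset.sum_congr rfl fun v _ => Finset.sum_congr rfl fun w _ => hskew v w
          _ = - ∑ v ∈ S, ∑ w ∈ S, h w v := by
              simp [Finset.sum_neg_distrib]
          _ = - ∑ v ∈ S, ∑ w ∈ S, h v w := by rw [Finset.sum_comm]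
      linarith
    calc flowValue s h = ∑ v ∈ S, ∑ w, h v w := h2.symm
      _ = ∑ v ∈ S, ((∑ w ∈ S, h v w) + (∑ w ∈ Sᶜ, h v w)) :=
          Finset.sum_congr rfl fun v _ => (Finset.sum_add_sum_compl S _).symm
      _ = (∑ v ∈ S, ∑ w ∈ S, h v w) + ∑ v ∈ S, ∑ w ∈ Sᶜ, h v w := Finset.sum_add_distrib
      _ = ∑ v ∈ S, ∑ w ∈ Sᶜ, h v w := by rw [h3]; ring
  have hsat : ∀ v ∈ S, ∀ w ∈ Sᶜ, f v w = c v w := by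
    intro v hv w hw
    by_contra hne
    have hlt : f v w < c v w := lt_of_le_of_ne (hf.1 v w) hne
    have hvreach : Relation.ReflTransGen r s v := by
      simpa [hS] using hv
    have : Relation.ReflTransGen r s w := Relation.ReflTransGen.tail hvreach hlt
    have hwn : ¬ Relation.ReflTransGen r s w := by
      have := Finset.mem_compl.mp hw
      simpa [hS] using this
    exact hwn this
  rw [key f hf, key g hg]
  apply Finset.sum_le_sum
  intro v hv
  apply Finset.sum_le_sum
  intro w hw
  rw [hsat v hv w hw]
  exact hg.1 v w

/-- if some flow saturates all edges `s → u₁` (`u₁ ∈ MU1`) and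
all edges `u₂ → t` (`u₂ ∈ MU2`), then some maximum flow does as well. -/
theorem valid_flow_to_valid_maxflow (c : V → V → ℝ) (hc : ∀ v w, 0 ≤ c v w)
    (s t : V) (hst : s ≠ t) (MU1 MU2 : Set V)
    (h : ∃ f, IsFlow c s t f ∧ Valid c s t MU1 MU2 f) :
    ∃ f, IsFlow c s t f ∧ Valid c s t MU1 MU2 f ∧
      ∀ g, IsFlow c s t g → flowValue s g ≤ flowValue s f := by
  classical
  obtain ⟨f₀, hf₀, hv₀⟩ := h
  set K : Set (V → V → ℝ) := {f | IsFlow c s t f ∧ Valid c s t MU1 MU2 f} with hK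
  have hcont : ∀ v w : V, Continuous (fun f : V → V → ℝ => f v w) :=
    fun v w => (continuous_apply w).comp (continuous_apply v)
  have hKclosed : IsClosed K := by
    have hdecomp : K = {f : V → V → ℝ | ∀ v w, f v w ≤ c v w}
        ∩ ({f : V → V → ℝ | ∀ v w, f v w = - f w v}
        ∩ ({f : V → V → ℝ | ∀ v, v ≠ s → v ≠ t → (∑ u, f u v) = 0}
        ∩ ({f : V → V → ℝ | ∀ u ∈ MU1, f s u = c s u}
        ∩ {f : V → V → ℝ | ∀ u ∈ MU2, f u t = c u t}))) := by
      ext f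
      simp only [hK, Set.mem_setOf_eq, Set.mem_inter_iff, IsFlow, Valid]
      tauto
    rw [hdecomp]
    refine IsClosed.inter ?_ (IsClosed.inter ?_ (IsClosed.inter ?_ (IsClosed.inter ?_ ?_)))
    · have : {f : V → V → ℝ | ∀ v w, f v w ≤ c v w}
          = ⋂ v, ⋂ w, {f : V → V → ℝ | f v w ≤ c v w} := by
        ext f; simp
      rw [this]
      exact isClosed_iInter fun v => isClosed_iInter fun w =>
        isClosed_le (hcont v w) continuous_const
    · have : {f : V → V → ℝ | ∀ v w, f v w = - f w v}
          = ⋂ v, ⋂ w, {f : V → V → ℝ | f v w = - f w v} := by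
        ext f; simp
      rw [this]
      exact isClosed_iInter fun v => isClosed_iInter fun w =>
        isClosed_eq (hcont v w) (hcont w v).neg
    · have : {f : V → V → ℝ | ∀ v, v ≠ s → v ≠ t → (∑ u, f u v) = 0}
          = ⋂ v, {f : V → V → ℝ | v ≠ s → v ≠ t → (∑ u, f u v) = 0} := by
        ext f; simp
      rw [this]
      refine isClosed_iInter fun v => ?_
      by_cases hvs : v = s
      · have : {f : V → V → ℝ | v ≠ s → v ≠ t → (∑ u, f u v) = 0} = Set.univ := by
          ext f; simp [hvs]
        rw [this]; exact isClosed_univ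
      · by_cases hvt : v = t
        · have : {f : V → V → ℝ | v ≠ s → v ≠ t → (∑ u, f u v) = 0} = Set.univ := by
            ext f; simp [hvt]
          rw [this]; exact isClosed_univ
        · have : {f : V → V → ℝ | v ≠ s → v ≠ t → (∑ u, f u v) = 0}
              = {f : V → V → ℝ | (∑ u, f u v) = 0} := by
            ext f; simp [hvs, hvt]
          rw [this]
          exact isClosed_eq (continuous_finset_sum _ fun u _ => hcont u v) continuous_const
    · have : {f : V → V → ℝ | ∀ u ∈ MU1, f s u = c s u}
          = ⋂ u ∈ MU1, {f : V → V → ℝ | f s u = c s u} := by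
        ext f; simp
      rw [this]
      exact isClosed_biInter fun u _ => isClosed_eq (hcont s u) continuous_const
    · have : {f : V → V → ℝ | ∀ u ∈ MU2, f u t = c u t}
          = ⋂ u ∈ MU2, {f : V → V → ℝ | f u t = c u t} := by
        ext f; simp
      rw [this]
      exact isClosed_biInter fun u _ => isClosed_eq (hcont u t) continuous_const
  have hKsub : K ⊆ Set.pi Set.univ
      (fun v => Set.pi Set.univ (fun w => Set.Icc (-(c w v)) (c v w))) := by
    intro f hfK
    rw [Set.mem_univ_pi]
    intro v
    rw [Set.mem_univ_pi]
    intro w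
    obtain ⟨⟨hcap, hskew, -⟩, -⟩ := hfK
    refine ⟨?_, hcap v w⟩
    rw [hskew v w]
    have := hcap w v
    linarith
  have hKcpt : IsCompact K :=
    IsCompact.of_isClosed_subset
      (isCompact_univ_pi fun v => isCompact_univ_pi fun w => isCompact_Icc) hKclosed hKsub
  have hKne : K.Nonempty := ⟨f₀, hf₀, hv₀⟩
  have hvalcont : Continuous (fun f : V → V → ℝ => flowValue s f) :=
    continuous_finset_sum _ fun w _ => hcont s w
  obtain ⟨fm, hfmK, hmax⟩ := hKcpt.exists_isMaxOn hKne hvalcont.continuousOn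
  obtain ⟨hfm, hvm⟩ := hfmK
  refine ⟨fm, hfm, hvm, ?_⟩
  by_cases hreach : Relation.ReflTransGen (fun v w => fm v w < c v w) s t
  · exfalso
    obtain ⟨g, hgflow, hgvalid, hlt⟩ := augment_lemma hfm hvm hst hreach
    have hgK : g ∈ K := ⟨hgflow, hgvalid⟩
    exact absurd (hmax hgK) (not_le.mpr hlt)
  · exact no_reach_max hfm hreach
end

section
/- Refinement preserves coarseness: let D be a fully probabilistic system and define R₁ = {(s1,s2) | L(s1)=L(s2)} and inductively R_{i+1} = {(s1,s2) ∈ R_i | P(s1,·) ⊑_{R_i} P(s2,·)}. Then for every i, the strong simulation preorder ⊑ is contained in R_i; moreover if R_{i+1} = R_i for some i, then R_i equals the strong simulation preorder ⊑. -/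
open Finset

variable {S : Type*} [Fintype S]

variable {AP : Type*}

/-- `R` is a strong simulation on the fully probabilistic system `(S, P, L)`. -/
def IsStrongSim (P : S → S → ℝ) (L : S → Set AP) (R : Set (S × S)) : Prop :=
  ∀ p ∈ R, L p.1 = L p.2 ∧ Lift R (P p.1) (P p.2)

/-- The strong simulation preorder: the union of all strong simulations. -/
def Sim (P : S → S → ℝ) (L : S → Set AP) : Set (S × S) :=
  {p | ∃ R, IsStrongSim P L R ∧ p ∈ R}

/-- The refinement sequence: `seq 0 = {(s₁,s₂) | L s₁ = L s₂}` (this is `R₁` in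
the paper) and `seq (i+1) = {(s₁,s₂) ∈ seq i | P(s₁,·) ⊑_{seq i} P(s₂,·)}`. -/
def seq (P : S → S → ℝ) (L : S → Set AP) : ℕ → Set (S × S)
  | 0 => {p | L p.1 = L p.2}
  | n + 1 => {p | p ∈ seq P L n ∧ Lift (seq P L n) (P p.1) (P p.2)}

lemma Lift.mono {S : Type*} [Fintype S] {R R' : Set (S × S)} (h : R ⊆ R')
    {μ μ' : S → ℝ} (hl : Lift R μ μ') : Lift R' μ μ' := by
  obtain ⟨Δ, h1, h2, h3, h4⟩ := hl
  exact ⟨Δ, h1, fun a b hab => by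
    rcases h2 a b hab with ⟨s, t, ha, hb, hst⟩ | hn
    · exact Or.inl ⟨s, t, ha, hb, h hst⟩
    · exact Or.inr hn, h3, h4⟩

/-- every `seq i` is coarser than the strong simulation preorder,
and any fixed point of the refinement equals the strong simulation preorder. -/
theorem refinement_correct (P : S → S → ℝ) (L : S → Set AP)
    (hP0 : ∀ s t, 0 ≤ P s t) (hP1 : ∀ s, ∑ t, P s t ≤ 1) :
    (∀ i, Sim P L ⊆ seq P L i) ∧
    (∀ i, seq P L (i + 1) = seq P L i → seq P L i = Sim P L) := by
  have hsub : ∀ i, Sim P L ⊆ seq P L i := by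
    intro i
    induction i with
    | zero =>
      rintro ⟨s, t⟩ ⟨R, hR, hmem⟩
      exact (hR _ hmem).1
    | succ n ih =>
      rintro ⟨s, t⟩ hp
      obtain ⟨R, hR, hmem⟩ := hp
      refine ⟨ih ⟨R, hR, hmem⟩, ?_⟩
      have hRsub : R ⊆ seq P L n := fun q hq => ih ⟨R, hR, hq⟩
      exact Lift.mono hRsub (hR _ hmem).2
  refine ⟨hsub, fun i hfix => ?_⟩
  have hanti : ∀ j, seq P L j ⊆ seq P L 0 := by
    intro j
    induction j with
    | zero => exact fun _ h => h
    | succ n ih => exact fun p hp => ih hp.1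
  have hsim : IsStrongSim P L (seq P L i) := by
    intro p hp
    have hp' : p ∈ seq P L (i + 1) := hfix ▸ hp
    exact ⟨hanti i hp, hp'.2⟩
  apply Set.Subset.antisymm
  · exact fun p hp => ⟨seq P L i, hsim, hp⟩
  · exact hsub i
end

section
/- On a Markov decision process (a probabilistic automaton where each state has at most one α-successor distribution per action α, and all successor distributions are stochastic), strong simulation and strong probabilistic simulation coincide: R is a strong simulation iff R is a strong probabilistic simulation. -/
open Finset

variable {S : Type*} [Fintype S]

variable {Act AP : Type*}

/-- on an MDP (at most one `α`-successor distribution per state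
and action, each of which is stochastic), strong simulation and strong
probabilistic simulation coincide. -/
theorem mdp_strongSim_iff_strongProbSim (trans : S → Act → Set (S → ℝ))
    (L : S → Set AP)
    (hUnique : ∀ s α μ ν, μ ∈ trans s α → ν ∈ trans s α → μ = ν)
    (hStoch : ∀ s α μ, μ ∈ trans s α → (∀ t, 0 ≤ μ t) ∧ (∑ t, μ t) = 1)
    (R : Set (S × S)) :
    IsStrongSimPA trans L R ↔ IsStrongProbSimPA trans L R := by
  constructor
  · intro h p hp
    obtain ⟨hL, hstep⟩ := h p hp
    refine ⟨hL, fun α μ₁ hμ₁ => ?_⟩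
    obtain ⟨μ₂, hμ₂, hlift⟩ := hstep α μ₁ hμ₁
    exact ⟨μ₂, ⟨1, fun _ => 1, fun _ => μ₂, one_pos, fun _ => hμ₂,
      fun _ => ⟨zero_le_one, le_refl 1⟩, by simp, fun t => by simp⟩, hlift⟩
  · intro h p hp
    obtain ⟨hL, hstep⟩ := h p hp
    refine ⟨hL, fun α μ₁ hμ₁ => ?_⟩
    obtain ⟨μ₂, ⟨k, c, ν, hk, hν, hc, hcsum, hμ₂⟩, hlift⟩ := hstep α μ₁ hμ₁
    have i0 : Fin k := ⟨0, hk⟩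
    have hall : ∀ i, ν i = ν i0 := fun i => hUnique _ _ _ _ (hν i) (hν i0)
    have : μ₂ = ν i0 := by
      funext t
      rw [hμ₂ t]
      calc ∑ i, c i * ν i t = ∑ i, c i * ν i0 t := by
            apply Finset.sum_congr rfl; intro i _; rw [hall i]
        _ = (∑ i, c i) * ν i0 t := by rw [Finset.sum_mul]
        _ = ν i0 t := by rw [hcsum, one_mul]
    exact ⟨ν i0, hν i0, this ▸ hlift⟩
end
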